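/- arXiv:1004.1128 — 3 statements merged into one kernel-verified Lean document; each statement's English description precedes it below -/
import Mathlib

section
/- Let A(x) be a power series with natural-number coefficients, let m₁,…,m_k be positive integers with d = gcd(m₁,…,m_k), and suppose (1 + x + ⋯ + x^{m_i−1})·A(x) ∈ RTN1 for each i = 1,…,k. Then there exists a natural number u such that a(n) − a(n−d) = o(a(n) + a(n−1) + ⋯ + a(n−u)) as n → ∞. -/
open Filter Finset

noncomputable section

/-- `R ∈ RT1`: coefficients eventually positive and `r(n-1)/r(n) → 1`. -/
def RT1 (r : ℕ → ℝ) : Prop :=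
  (∀ᶠ n in Filter.atTop, 0 < r n) ∧
    Filter.Tendsto (fun n => r (n - 1) / r n) Filter.atTop (nhds 1)

/-- The coefficients are all natural numbers. -/
def IsNatSeries (r : ℕ → ℝ) : Prop := ∀ n, ∃ k : ℕ, r n = (k : ℝ)

/-- Members of `RT1` with natural-number coefficients. -/
def RTN1 (r : ℕ → ℝ) : Prop := RT1 r ∧ IsNatSeries r

/-- Coefficient sequence of `R(x^d)`. -/
def substPow (d : ℕ) (r : ℕ → ℝ) : ℕ → ℝ := fun n => if d ∣ n then r (n / d) else 0

/-- Cauchy product of coefficient sequences. -/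
def cauchy (a b : ℕ → ℝ) : ℕ → ℝ := fun n => ∑ j ∈ Finset.range (n + 1), a j * b (n - j)

namespace GcdAux

/-- window sum -/
def D (a : ℕ → ℝ) (u n : ℕ) : ℝ := ∑ j ∈ Finset.range (u + 1), a (n - j)

/-- the key property -/
def P (a : ℕ → ℝ) (s : ℕ) : Prop :=
  ∃ u : ℕ, (∀ᶠ n in atTop, 0 < D a u n) ∧
    Tendsto (fun n => (a n - a (n - s)) / D a u n) atTop (nhds 0)

variable {a : ℕ → ℝ} (ha : ∀ n, 0 ≤ a n)

include ha in
lemma D_nonneg (u n : ℕ) : 0 ≤ D a u n :=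
  Finset.sum_nonneg fun j _ => ha _

include ha in
lemma D_mono {u v : ℕ} (huv : u ≤ v) (n : ℕ) : D a u n ≤ D a v n :=
  Finset.sum_le_sum_of_subset_of_nonneg
    (Finset.range_subset_range.2 (by omega)) (fun j _ _ => ha _)

include ha in
lemma D_shift_le (t u n : ℕ) : D a u (n - t) ≤ D a (t + u) n := by
  have h1 : D a u (n - t) = ∑ j ∈ Finset.Ico t (t + (u + 1)), a (n - j) := by
    rw [Finset.sum_Ico_eq_sum_range]
    simp only [Nat.add_sub_cancel_left, D]
    refine Finset.sum_congr rfl fun j _ => ?_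
    rw [Nat.sub_sub]
  rw [h1]
  refine Finset.sum_le_sum_of_subset_of_nonneg ?_ (fun j _ _ => ha _)
  intro j hj
  simp only [Finset.mem_Ico] at hj
  simp only [Finset.mem_range]
  omega

include ha in
lemma shift_key {num : ℕ → ℝ} {u : ℕ} (s : ℕ) {v : ℕ} (hv : s + u ≤ v)
    (hpos : ∀ᶠ n in atTop, 0 < D a u n)
    (h : Tendsto (fun n => num n / D a u n) atTop (nhds 0)) :
    Tendsto (fun n => num (n - s) / D a v n) atTop (nhds 0) := by
  have hcomp : Tendsto (fun n : ℕ => n - s) atTop atTop := tendsto_sub_atTop_nat s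
  refine squeeze_zero_norm' (a := fun n => |num (n - s) / D a u (n - s)|) ?_ ?_
  · filter_upwards [hcomp.eventually hpos] with n hn
    have hle : D a u (n - s) ≤ D a v n :=
      (D_shift_le ha s u n).trans (D_mono ha hv n)
    have hvpos : 0 < D a v n := lt_of_lt_of_le hn hle
    rw [Real.norm_eq_abs, abs_div, abs_div, abs_of_pos hn, abs_of_pos hvpos]
    exact div_le_div_of_nonneg_left (abs_nonneg _) hn hle
  · have := (h.comp hcomp).abs
    simpa using this

include ha in
lemma P_add {s t : ℕ} (hs : P a s) (ht : P a t) : P a (s + t) := by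
  obtain ⟨u1, hp1, h1⟩ := hs
  obtain ⟨u2, hp2, h2⟩ := ht
  refine ⟨max u1 (s + u2), ?_, ?_⟩
  · filter_upwards [hp1] with n hn
    exact lt_of_lt_of_le hn (D_mono ha (le_max_left _ _) n)
  · have key1 : Tendsto (fun n => (a n - a (n - s)) / D a (max u1 (s + u2)) n)
        atTop (nhds 0) := by
      have := shift_key ha (num := fun n => a n - a (n - s)) 0
        (v := max u1 (s + u2)) (by simpa using le_max_left u1 (s + u2)) hp1 h1
      simpa using this
    have key2 : Tendsto (fun n => (a (n - s) - a (n - (s + t))) / D a (max u1 (s + u2)) n)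
        atTop (nhds 0) := by
      have := shift_key ha (num := fun n => a n - a (n - t)) s
        (v := max u1 (s + u2)) (le_max_right _ _) hp2 h2
      refine this.congr fun n => ?_
      simp only [Nat.sub_sub]
    have := key1.add key2
    rw [add_zero] at this
    refine this.congr fun n => ?_
    rw [← add_div]
    ring_nf

include ha in
lemma P_sub {s t : ℕ} (hst : s ≤ t) (hs : P a s) (ht : P a t) : P a (t - s) := by
  obtain ⟨u1, hp1, h1⟩ := hs
  obtain ⟨u2, hp2, h2⟩ := ht
  refine ⟨max u2 ((t - s) + u1), ?_, ?_⟩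
  · filter_upwards [hp2] with n hn
    exact lt_of_lt_of_le hn (D_mono ha (le_max_left _ _) n)
  · have key1 : Tendsto (fun n => (a n - a (n - t)) / D a (max u2 ((t - s) + u1)) n)
        atTop (nhds 0) := by
      have := shift_key ha (num := fun n => a n - a (n - t)) 0
        (v := max u2 ((t - s) + u1)) (by simpa using le_max_left u2 ((t - s) + u1)) hp2 h2
      simpa using this
    have key2 : Tendsto (fun n => (a (n - (t - s)) - a (n - t)) / D a (max u2 ((t - s) + u1)) n)
        atTop (nhds 0) := by
      have := shift_key ha (num := fun n => a n - a (n - s)) (t - s)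
        (v := max u2 ((t - s) + u1)) (le_max_right _ _) hp1 h1
      refine this.congr fun n => ?_
      simp only [Nat.sub_sub, Nat.sub_add_cancel hst]
    have := key1.sub key2
    rw [sub_zero] at this
    refine this.congr fun n => ?_
    rw [← sub_div]
    ring_nf


lemma cauchy_eq {mi : ℕ} (hmi : 1 ≤ mi) {n : ℕ} (hn : mi ≤ n + 1) :
    cauchy (fun j => if j < mi then (1:ℝ) else 0) a n = D a (mi - 1) n := by
  unfold cauchy D
  have h1 : mi - 1 + 1 = mi := by omega
  rw [h1]
  have h2 : ∀ j ∈ Finset.range (n + 1),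
      (if j < mi then (1:ℝ) else 0) * a (n - j) = if j < mi then a (n - j) else 0 := by
    intro j _
    split_ifs <;> simp
  rw [Finset.sum_congr rfl h2, ← Finset.sum_filter]
  congr 1
  ext j
  simp only [Finset.mem_filter, Finset.mem_range]
  omega

lemma D_window_diff {mi : ℕ} (hmi : 1 ≤ mi) (n : ℕ) :
    D a (mi - 1) n + a (n - mi) = a n + D a (mi - 1) (n - 1) := by
  unfold D
  have h1 : mi - 1 + 1 = mi := by omega
  rw [h1]
  have h2 : ∑ j ∈ Finset.range (mi + 1), a (n - j)
      = (∑ j ∈ Finset.range mi, a (n - j)) + a (n - mi) := Finset.sum_range_succ _ _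
  have h3 : ∑ j ∈ Finset.range (mi + 1), a (n - j)
      = (∑ j ∈ Finset.range mi, a (n - (j + 1))) + a (n - 0) := Finset.sum_range_succ' _ _
  have h4 : ∑ j ∈ Finset.range mi, a (n - (j + 1)) = ∑ j ∈ Finset.range mi, a (n - 1 - j) :=
    Finset.sum_congr rfl fun j _ => by congr 1; omega
  rw [h4, Nat.sub_zero] at h3
  linarith [h2.symm.trans h3]

include ha in
lemma P_base {mi : ℕ} (hmi : 1 ≤ mi)
    (hb : RTN1 (cauchy (fun j => if j < mi then (1:ℝ) else 0) a)) : P a mi := by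
  set b := cauchy (fun j => if j < mi then (1:ℝ) else 0) a with hbdef
  obtain ⟨⟨hpos, hrat⟩, -⟩ := hb
  have heq : ∀ᶠ n in atTop, b n = D a (mi - 1) n := by
    filter_upwards [eventually_ge_atTop mi] with n hn
    exact cauchy_eq hmi (by omega)
  refine ⟨mi - 1, ?_, ?_⟩
  · filter_upwards [hpos, heq] with n h1 h2
    rwa [h2] at h1
  · have hlim : Tendsto (fun n => 1 - b (n - 1) / b n) atTop (nhds 0) := by
      have := (tendsto_const_nhds (x := (1:ℝ)) (f := atTop)).sub hrat
      simpa using this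
    refine hlim.congr' ?_
    filter_upwards [hpos, heq, (tendsto_sub_atTop_nat 1).eventually heq,
      eventually_ge_atTop mi] with n h1 h2 h3 hn
    have hbn : b n ≠ 0 := ne_of_gt h1
    have hdiff : a n - a (n - mi) = b n - b (n - 1) := by
      rw [h2, h3]
      have := D_window_diff (a := a) hmi n
      linarith
    rw [← h2, hdiff, sub_div, div_self hbn]

include ha in
lemma P_zero (h0 : ∃ u, ∀ᶠ n in atTop, 0 < D a u n) : P a 0 := by
  obtain ⟨u, hu⟩ := h0
  refine ⟨u, hu, ?_⟩
  have : (fun n => (a n - a (n - 0)) / D a u n) = fun _ => (0:ℝ) := by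
    funext n; simp
  rw [this]
  exact tendsto_const_nhds

include ha in
lemma P_sub_mul {s t : ℕ} (hs : P a s) (ht : P a t) : ∀ c, P a (t - c * s) := by
  intro c
  induction c with
  | zero => simpa using ht
  | succ c ih =>
    rcases le_or_gt s (t - c * s) with hle | hlt
    · have hmul : t - (c + 1) * s = (t - c * s) - s := by
        rw [add_mul, one_mul, ← Nat.sub_sub]
      rw [hmul]
      exact P_sub ha hle hs ih
    · have hmul : t - (c + 1) * s = (t - c * s) - s := by
        rw [add_mul, one_mul, ← Nat.sub_sub]
      rw [hmul, Nat.sub_eq_zero_of_le hlt.le]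
      exact P_zero ha ⟨_, hs.choose_spec.1⟩

include ha in
lemma P_mod {s t : ℕ} (hs : P a s) (ht : P a t) (h0 : 0 < s) : P a (t % s) := by
  have h1 : t % s + t / s * s = t := Nat.mod_add_div' t s
  have : t % s = t - t / s * s := by omega
  rw [this]
  exact P_sub_mul ha hs ht _

include ha in
lemma P_gcd : ∀ s t : ℕ, P a s → P a t → P a (Nat.gcd s t) := by
  intro s t
  induction s, t using Nat.gcd.induction with
  | H0 t => intro hs ht; simpa using ht
  | H1 s t hpos ih =>
    intro hs ht
    rw [Nat.gcd_rec]
    exact ih (P_mod ha hs ht hpos) hs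

end GcdAux

/-- If `(1 + x + ⋯ + x^{m_i-1})·A(x) ∈ RTN1` for `i = 1, …, k` and `d = gcd(m₁,…,m_k)`,
then `a(n) - a(n-d) = o(a(n) + ⋯ + a(n-u))` for a suitable `u`. -/
theorem gcd_little_o (a : ℕ → ℝ) (hnat : IsNatSeries a) (k : ℕ) (hk : 1 ≤ k)
    (m : Fin k → ℕ) (hm : ∀ i, 1 ≤ m i)
    (h : ∀ i, RTN1 (cauchy (fun j => if j < m i then (1 : ℝ) else 0) a)) :
    ∃ u : ℕ, Filter.Tendsto
      (fun n => (a n - a (n - Finset.univ.gcd m)) / ∑ j ∈ Finset.range (u + 1), a (n - j))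
      Filter.atTop (nhds 0) := by
  have ha : ∀ n, 0 ≤ a n := by
    intro n
    obtain ⟨c, hc⟩ := hnat n
    rw [hc]
    exact Nat.cast_nonneg c
  have i0 : Fin k := ⟨0, hk⟩
  have hbase : ∀ i, GcdAux.P a (m i) := fun i => GcdAux.P_base ha (hm i) (h i)
  have h0 : ∃ u, ∀ᶠ n in Filter.atTop, 0 < GcdAux.D a u n :=
    ⟨_, (hbase i0).choose_spec.1⟩
  have hgcd : ∀ s : Finset (Fin k), GcdAux.P a (s.gcd m) := by
    intro s
    induction s using Finset.induction with
    | empty => simpa using GcdAux.P_zero ha h0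
    | insert i s hni ih =>
      rw [Finset.gcd_insert]
      exact GcdAux.P_gcd ha _ _ (hbase _) ih
  obtain ⟨u, -, hu⟩ := hgcd Finset.univ
  exact ⟨u, hu⟩
end
end

section
/- Let A(x) be a power series with natural-number coefficients, let m₁,…,m_k be positive integers with gcd(m₁,…,m_k) = 1, and suppose (1 + x + ⋯ + x^{m_i−1})·A(x) ∈ RTN1 for each i = 1,…,k. Then A(x) ∈ RTN1. -/
open Filter Finset

noncomputable section

private lemma aux_mul_mem (S : Set ℕ) (h0 : 0 ∈ S) (hadd : ∀ a ∈ S, ∀ b ∈ S, a + b ∈ S)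
    {x : ℕ} (hx : x ∈ S) : ∀ n : ℕ, x * n ∈ S := by
  intro n
  induction n with
  | zero => simpa using h0
  | succ n ih => rw [Nat.mul_succ]; exact hadd _ ih _ hx

private lemma aux_bezout_set {ι : Type*} [DecidableEq ι] (S : Set ℕ) (h0 : 0 ∈ S)
    (hadd : ∀ a ∈ S, ∀ b ∈ S, a + b ∈ S) (m : ι → ℕ) (s : Finset ι)
    (hmem : ∀ i ∈ s, m i ∈ S) : ∃ p ∈ S, ∃ q ∈ S, p = q + s.gcd m := by
  induction s using Finset.induction_on with
  | empty => exact ⟨0, h0, 0, h0, by simp⟩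
  | insert _ _ hi ih =>
    rename_i i s
    obtain ⟨p, hp, q, hq, hpq⟩ := ih (fun j hj => hmem j (Finset.mem_insert_of_mem hj))
    rw [Finset.gcd_insert]
    set G := s.gcd m with hG
    set g₁ := m i with hg₁
    have hg₁S : g₁ ∈ S := hmem i (Finset.mem_insert_self i s)
    set x := Nat.gcdA g₁ G with hxdef
    set y := Nat.gcdB g₁ G with hydef
    have hbez : (Nat.gcd g₁ G : ℤ) = g₁ * x + G * y := Nat.gcd_eq_gcd_ab g₁ G
    have hgcd_eq : GCDMonoid.gcd g₁ G = Nat.gcd g₁ G := rfl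
    refine ⟨g₁ * x.toNat + p * y.toNat + q * (-y).toNat,
      hadd _ (hadd _ (aux_mul_mem S h0 hadd hg₁S _) _ (aux_mul_mem S h0 hadd hp _)) _
        (aux_mul_mem S h0 hadd hq _),
      g₁ * (-x).toNat + p * (-y).toNat + q * y.toNat,
      hadd _ (hadd _ (aux_mul_mem S h0 hadd hg₁S _) _ (aux_mul_mem S h0 hadd hp _)) _
        (aux_mul_mem S h0 hadd hq _), ?_⟩
    rw [hgcd_eq]
    have hx : (x.toNat : ℤ) - ((-x).toNat : ℤ) = x := by omega
    have hy : (y.toNat : ℤ) - ((-y).toNat : ℤ) = y := by omega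
    have hpq' : (p : ℤ) = q + G := by exact_mod_cast hpq
    have : (g₁ * x.toNat + p * y.toNat + q * (-y).toNat : ℤ)
        = (g₁ * (-x).toNat + p * (-y).toNat + q * y.toNat : ℤ) + (Nat.gcd g₁ G : ℤ) := by
      rw [hbez]
      linear_combination (g₁ : ℤ) * hx + (G : ℤ) * hy + (y : ℤ) * hpq'
        + ((y.toNat : ℤ) - (-y).toNat - y) * hpq'
    exact_mod_cast this

private lemma aux_hb_sum (a : ℕ → ℝ) (k : ℕ) (m : Fin k → ℕ) (i : Fin k) (n : ℕ)
    (hn : m i ≤ n + 1) :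
    cauchy (fun j => if j < m i then (1 : ℝ) else 0) a n
      = ∑ t ∈ Finset.range (m i), a (n - t) := by
  unfold cauchy
  simp only [ite_mul, one_mul, zero_mul]
  rw [← Finset.sum_filter]
  congr 1
  ext j
  simp only [Finset.mem_filter, Finset.mem_range]
  omega

private lemma aux_hb_ge (a : ℕ → ℝ) (k : ℕ) (m : Fin k → ℕ) (ha : ∀ n, 0 ≤ a n)
    (hm : ∀ i, 1 ≤ m i) (i : Fin k) (n : ℕ) :
    a n ≤ cauchy (fun j => if j < m i then (1 : ℝ) else 0) a n := by
  unfold cauchy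
  have h0 : (0 : ℕ) ∈ Finset.range (n + 1) := by simp
  have := Finset.single_le_sum (f := fun j => (if j < m i then (1:ℝ) else 0) * a (n - j))
    (fun j _ => by split <;> simp [ha]) h0
  simpa [Nat.lt_of_lt_of_le Nat.zero_lt_one (hm i)] using this

/-- If `(1 + x + ⋯ + x^{m_i-1})·A(x) ∈ RTN1` for `i = 1, …, k` and `gcd(m₁,…,m_k) = 1`,
then `A ∈ RTN1`. -/
theorem gcd_one_RTN1 (a : ℕ → ℝ) (hnat : IsNatSeries a) (k : ℕ) (hk : 1 ≤ k)
    (m : Fin k → ℕ) (hm : ∀ i, 1 ≤ m i) (hgcd : Finset.univ.gcd m = 1)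
    (h : ∀ i, RTN1 (cauchy (fun j => if j < m i then (1 : ℝ) else 0) a)) :
    RTN1 a := by
  set b : Fin k → ℕ → ℝ := fun i => cauchy (fun j => if j < m i then (1 : ℝ) else 0) a with hbdef
  have ha : ∀ n, 0 ≤ a n := fun n => by obtain ⟨c, hc⟩ := hnat n; rw [hc]; positivity
  have hbpos : ∀ i, ∀ᶠ n in atTop, 0 < b i n := fun i => (h i).1.1
  have hbrat : ∀ i, Tendsto (fun n => b i (n - 1) / b i n) atTop (nhds 1) := fun i => (h i).1.2
  have hbsum : ∀ i n, m i ≤ n + 1 → b i n = ∑ t ∈ Finset.range (m i), a (n - t) :=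
    fun i n hn => aux_hb_sum a k m i n hn
  have hbge : ∀ i n, a n ≤ b i n := fun i n => aux_hb_ge a k m ha hm i n
  -- shift ratios tend to 1
  have hshift : ∀ (i : Fin k) (t : ℕ), Tendsto (fun n => b i (n - t) / b i n) atTop (nhds 1) := by
    intro i t
    induction t with
    | zero =>
      have he : ∀ᶠ n in atTop, (1 : ℝ) = b i (n - 0) / b i n :=
        (hbpos i).mono fun n hn => by simp [div_self hn.ne']
      exact Tendsto.congr' he tendsto_const_nhds
    | succ t ih =>
      have h1 : Tendsto (fun n => b i ((n - 1) - t) / b i (n - 1)) atTop (nhds 1) :=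
        ih.comp (tendsto_sub_atTop_nat 1)
      have h2 := (h1.mul (hbrat i))
      rw [mul_one] at h2
      refine Tendsto.congr' ?_ h2
      have hev : ∀ᶠ n in atTop, 0 < b i (n - 1) :=
        (tendsto_sub_atTop_nat 1).eventually (hbpos i)
      filter_upwards [hev] with n hn
      have : n - 1 - t = n - (t + 1) := by omega
      rw [this, div_mul_div_comm, mul_comm (b i (n-1)) (b i n), mul_div_mul_right _ _ hn.ne']
  -- comparability
  have hcomp : ∀ i j : Fin k, ∀ᶠ n in atTop, b i n ≤ ((m i : ℝ) + 1) * b j n := by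
    intro i j
    have hsum : Tendsto (fun n => (∑ t ∈ Finset.range (m i), b j (n - t)) / b j n) atTop
        (nhds (m i)) := by
      have := tendsto_finset_sum (Finset.range (m i)) (fun t _ => hshift j t)
      simp only [Finset.sum_const, Finset.card_range, nsmul_eq_mul, mul_one] at this
      refine this.congr fun n => ?_
      rw [Finset.sum_div]
    have hlt : ∀ᶠ n in atTop, (∑ t ∈ Finset.range (m i), b j (n - t)) / b j n < (m i : ℝ) + 1 :=
      hsum.eventually (eventually_lt_nhds (by linarith))
    filter_upwards [hlt, hbpos j, eventually_ge_atTop (m i)] with n h1 h2 h3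
    have hble : b i n ≤ ∑ t ∈ Finset.range (m i), b j (n - t) := by
      rw [hbsum i n (by omega)]
      exact Finset.sum_le_sum fun t _ => hbge j (n - t)
    have := (div_lt_iff₀ h2).1 h1
    linarith
  set i₀ : Fin k := ⟨0, hk⟩ with hi₀
  set B : ℕ → ℝ := b i₀ with hB
  -- key relation
  have hrel : ∀ (i : Fin k) (n : ℕ), m i ≤ n → a n - a (n - m i) = b i n - b i (n - 1) := by
    intro i n hn
    have h1 := hbsum i n (by omega)
    have h2 := hbsum i (n - 1) (by omega)
    obtain ⟨M, hM⟩ : ∃ M, m i = M + 1 := ⟨m i - 1, by have := hm i; omega⟩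
    rw [hM] at h1 h2
    rw [Finset.sum_range_succ'] at h1
    rw [Finset.sum_range_succ] at h2
    have e1 : ∀ t, n - 1 - t = n - (t + 1) := fun t => by omega
    have e2 : n - 1 - M = n - m i := by omega
    rw [e2] at h2
    have h2' : b i (n - 1) = ∑ t ∈ Finset.range M, a (n - (t + 1)) + a (n - m i) := by
      rw [h2]; congr 1; exact Finset.sum_congr rfl fun t _ => by rw [e1 t]
    have hn0 : n - 0 = n := by omega
    rw [hn0] at h1
    rw [h1, h2']; ring
  -- members of S
  set S : Set ℕ := {c | Tendsto (fun n => (a n - a (n - c)) / B n) atTop (nhds 0)} with hS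
  have hS0 : 0 ∈ S := by
    have : (fun n => (a n - a (n - 0)) / B n) = fun _ => (0 : ℝ) := by
      funext n; simp
    rw [hS]; simp only [Set.mem_setOf_eq, this]; exact tendsto_const_nhds
  have hkey : ∀ i : Fin k, m i ∈ S := by
    intro i
    have h0 : Tendsto (fun n => (b i n - b i (n - 1)) / b i n) atTop (nhds 0) := by
      have h1 := (tendsto_const_nhds (x := (1:ℝ)) (f := atTop)).sub (hbrat i)
      rw [sub_self] at h1
      refine Tendsto.congr' ?_ h1
      filter_upwards [hbpos i] with n hn
      rw [sub_div, div_self hn.ne']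
    have hg : Tendsto (fun n => ((m i : ℝ) + 1) * |(b i n - b i (n - 1)) / b i n|) atTop
        (nhds 0) := by
      have := (h0.abs).const_mul ((m i : ℝ) + 1)
      simpa using this
    refine squeeze_zero_norm' ?_ hg
    filter_upwards [eventually_ge_atTop (m i), hbpos i, hbpos i₀, hcomp i i₀] with n h1 h2 h3 h4
    rw [hrel i n h1]
    rw [Real.norm_eq_abs, abs_div, abs_div, abs_of_pos h3, abs_of_pos h2, mul_div_assoc',
      div_le_div_iff₀ h3 h2]
    nlinarith [abs_nonneg (b i n - b i (n-1))]
  have hSadd : ∀ c ∈ S, ∀ d ∈ S, c + d ∈ S := by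
    intro c hc d hd
    have h1 : Tendsto (fun n => (a n - a (n - c)) / B n) atTop (nhds 0) := hc
    have h2 : Tendsto (fun n => (a (n - c) - a ((n - c) - d)) / B (n - c)) atTop (nhds 0) :=
      hd.comp (tendsto_sub_atTop_nat c)
    have h3 : Tendsto (fun n => B (n - c) / B n) atTop (nhds 1) := hshift i₀ c
    have h4 := h1.add ((h2.mul h3))
    rw [zero_mul, add_zero] at h4
    refine Tendsto.congr' ?_ h4
    have hev : ∀ᶠ n in atTop, 0 < B (n - c) := (tendsto_sub_atTop_nat c).eventually (hbpos i₀)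
    filter_upwards [hev] with n hn
    have e1 : n - c - d = n - (c + d) := by omega
    rw [div_mul_div_comm, mul_comm (B (n-c)) (B n), mul_div_mul_right _ _ hn.ne', e1,
      ← add_div]
    ring_nf
  -- consecutive elements via bezout
  obtain ⟨p, hp, q, hq, hpq⟩ := aux_bezout_set S hS0 hSadd m Finset.univ (fun i _ => hkey i)
  rw [hgcd] at hpq
  have hone : (1 : ℕ) ∈ S := by
    have h1 : Tendsto (fun n => (a n - a (n - p)) / B n) atTop (nhds 0) := hp
    have h2 : Tendsto (fun n => (a (n - 1) - a ((n - 1) - q)) / B (n - 1)) atTop (nhds 0) :=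
      hq.comp (tendsto_sub_atTop_nat 1)
    have h3 : Tendsto (fun n => B (n - 1) / B n) atTop (nhds 1) := hshift i₀ 1
    have h4 := h1.sub (h2.mul h3)
    rw [zero_mul, sub_zero] at h4
    refine Tendsto.congr' ?_ h4
    have hev : ∀ᶠ n in atTop, 0 < B (n - 1) := (tendsto_sub_atTop_nat 1).eventually (hbpos i₀)
    filter_upwards [hev] with n hn
    have e1 : n - 1 - q = n - p := by omega
    rw [div_mul_div_comm, mul_comm (B (n-1)) (B n), mul_div_mul_right _ _ hn.ne', e1,
      div_sub_div_same]
    ring_nf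
  have hall : ∀ t : ℕ, t ∈ S := by
    intro t
    induction t with
    | zero => exact hS0
    | succ t ih => exact hSadd t ih 1 hone
  -- a n / B n → 1 / m i₀
  have hm0 : (0 : ℝ) < m i₀ := by exact_mod_cast hm i₀
  have hsum0 : Tendsto (fun n => ∑ t ∈ Finset.range (m i₀), (a n - a (n - t)) / B n) atTop
      (nhds 0) := by
    have := tendsto_finset_sum (Finset.range (m i₀)) (fun t _ => hall t)
    simpa using this
  have htend : Tendsto (fun n => (m i₀ : ℝ) * (a n / B n) - 1) atTop (nhds 0) := by
    refine Tendsto.congr' ?_ hsum0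
    filter_upwards [eventually_ge_atTop (m i₀), hbpos i₀] with n h1 h2
    rw [← Finset.sum_div, Finset.sum_sub_distrib, Finset.sum_const, Finset.card_range,
      ← hbsum i₀ n (by omega)]
    rw [sub_div, nsmul_eq_mul, mul_div_assoc, div_self h2.ne']
  have hA : Tendsto (fun n => a n / B n) atTop (nhds (1 / (m i₀ : ℝ))) := by
    have h5 := htend.add (tendsto_const_nhds (x := (1:ℝ)) (f := atTop))
    rw [zero_add] at h5
    have h5' : Tendsto (fun n => (m i₀ : ℝ) * (a n / B n)) atTop (nhds 1) := by
      refine Tendsto.congr (fun n => by ring) h5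
    have h6 := h5'.const_mul (1 / (m i₀ : ℝ))
    rw [mul_one] at h6
    refine h6.congr fun n => ?_
    field_simp
  -- positivity
  have hapos : ∀ᶠ n in atTop, 0 < a n := by
    have hev1 : ∀ᶠ n in atTop, 0 < a n / B n :=
      hA.eventually (eventually_gt_nhds (by positivity))
    filter_upwards [hev1, hbpos i₀] with n h1 h2
    rcases div_pos_iff.1 h1 with ⟨h3, _⟩ | ⟨_, h4⟩
    · exact h3
    · linarith
  -- ratio
  have hA' : Tendsto (fun n => a (n - 1) / B n) atTop (nhds (1 / (m i₀ : ℝ))) := by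
    have h7 : Tendsto (fun n => a (n - 1) / B (n - 1)) atTop (nhds (1 / (m i₀ : ℝ))) :=
      hA.comp (tendsto_sub_atTop_nat 1)
    have h8 := h7.mul (hbrat i₀)
    rw [mul_one] at h8
    refine Tendsto.congr' ?_ h8
    filter_upwards [(tendsto_sub_atTop_nat 1).eventually (hbpos i₀)] with n hn
    rw [div_mul_div_comm, mul_comm (B (n-1)) (B n), mul_div_mul_right _ _ hn.ne']
  have hratio : Tendsto (fun n => a (n - 1) / a n) atTop (nhds 1) := by
    have h9 := hA'.div hA (by positivity)
    rw [div_self (by positivity : (1 / (m i₀ : ℝ)) ≠ 0)] at h9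
    refine Tendsto.congr' ?_ h9
    filter_upwards [hbpos i₀, hapos] with n h1 h2
    show (a (n - 1) / B n) / (a n / B n) = a (n - 1) / a n
    rw [div_div_div_eq, mul_comm (B n) (a n), mul_div_mul_right _ _ h1.ne']
  exact ⟨⟨hapos, hratio⟩, hnat⟩
end
end

section
/- Every power series A(x) in the class 𝔊 has radius of convergence at least 1. -/
open Filter Finset

noncomputable section

/-- Cauchy product of a finite tuple of coefficient sequences. -/
def cauchyProd : (j : ℕ) → (Fin j → (ℕ → ℝ)) → (ℕ → ℝ)
  | 0, _ => fun n => if n = 0 then 1 else 0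
  | j + 1, f => cauchy (f 0) (cauchyProd j fun i => f i.succ)

open Classical in
/-- The Pólya operator `E_m`:  `E_0(A) = 1` and for `m ≥ 1`
`E_m(A) = ∑_{j=1}^m (1/j!) ∑_{m₁+⋯+m_j=m, m_i ≥ 1} (1/(m₁⋯m_j)) A(x^{m₁})⋯A(x^{m_j})`. -/
def Em (m : ℕ) (a : ℕ → ℝ) : ℕ → ℝ :=
  if m = 0 then (fun n => if n = 0 then 1 else 0)
  else fun n =>
    ∑ j ∈ Finset.Icc 1 m, (1 / (Nat.factorial j : ℝ)) *
      ∑ t ∈ (Finset.Nat.antidiagonalTuple j m).filter (fun t => ∀ i, 1 ≤ t i),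
        (1 / ∏ i, (t i : ℝ)) * cauchyProd j (fun i => substPow (t i) a) n

/-- The Pólya operator `E_{≥ m}(A) := ∑_{j=m}^∞ E_j(A)`. -/
def Ege (m : ℕ) (a : ℕ → ℝ) : ℕ → ℝ := fun n => ∑' j : ℕ, if m ≤ j then Em j a n else 0

/-- The class `𝔊`: the smallest class of power series containing `x` and `x/(1-x^m)`
(`m ≥ 1`) and closed under addition, Cauchy product, `E_m` and `E_{≥m}` (`m ≥ 1`). -/
inductive InG : (ℕ → ℝ) → Prop
  | X : InG (fun n => if n = 1 then (1 : ℝ) else 0)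
  | geom : ∀ m : ℕ, 1 ≤ m → InG (fun n => if 1 ≤ n ∧ m ∣ (n - 1) then (1 : ℝ) else 0)
  | add : ∀ a b : ℕ → ℝ, InG a → InG b → InG (fun n => a n + b n)
  | mul : ∀ a b : ℕ → ℝ, InG a → InG b → InG (cauchy a b)
  | em : ∀ (a : ℕ → ℝ) (m : ℕ), 1 ≤ m → InG a → InG (Em m a)
  | ege : ∀ (a : ℕ → ℝ) (m : ℕ), 1 ≤ m → InG a → InG (Ege m a)


/-! ### Auxiliary lemmas -/

section AuxLemmas

variable {a b : ℕ → ℝ}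

lemma cauchy_nonneg (ha : ∀ n, 0 ≤ a n) (hb : ∀ n, 0 ≤ b n) (n : ℕ) : 0 ≤ cauchy a b n :=
  Finset.sum_nonneg fun j _ => mul_nonneg (ha j) (hb _)

lemma cauchyProd_nonneg : ∀ {j : ℕ} {f : Fin j → ℕ → ℝ}, (∀ i n, 0 ≤ f i n) →
    ∀ n, 0 ≤ cauchyProd j f n := by
  intro j
  induction j with
  | zero => intro f _ n; simp only [cauchyProd]; split <;> norm_num
  | succ j ih =>
    intro f hf n
    exact cauchy_nonneg (hf 0) (ih fun i m => hf i.succ m) n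

lemma cauchy_vanish {d e : ℕ} (ha : ∀ n < d, a n = 0) (hb : ∀ n < e, b n = 0)
    {n : ℕ} (hn : n < d + e) : cauchy a b n = 0 := by
  apply Finset.sum_eq_zero
  intro k hk
  rw [Finset.mem_range] at hk
  rcases lt_or_ge k d with h | h
  · rw [ha k h, zero_mul]
  · rw [hb (n - k) (by omega), mul_zero]

lemma cauchyProd_vanish : ∀ {j : ℕ} {f : Fin j → ℕ → ℝ} {d : Fin j → ℕ},
    (∀ i, ∀ n < d i, f i n = 0) → ∀ {n : ℕ}, n < ∑ i, d i → cauchyProd j f n = 0 := by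
  intro j
  induction j with
  | zero => intro f d _ n hn; simp at hn
  | succ j ih =>
    intro f d hf n hn
    rw [Fin.sum_univ_succ] at hn
    exact cauchy_vanish (hf 0) (fun m hm => ih (fun i => hf i.succ) hm) hn

lemma substPow_nonneg (ha : ∀ n, 0 ≤ a n) (d n : ℕ) : 0 ≤ substPow d a n := by
  simp only [substPow]; split
  · exact ha _
  · exact le_rfl

lemma substPow_vanish (ha0 : a 0 = 0) {d n : ℕ} (hn : n < d) : substPow d a n = 0 := by
  simp only [substPow]; split
  · rw [Nat.div_eq_of_lt hn, ha0]
  · rfl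

lemma substPow_summable_tsum (ha0 : a 0 = 0) (ha : ∀ n, 0 ≤ a n)
    (hs : ∀ y : ℝ, 0 < y → y < 1 → Summable fun n => a n * y ^ n)
    {x : ℝ} (hx0 : 0 < x) (hx1 : x < 1) {d : ℕ} (hd : 1 ≤ d) :
    Summable (fun n => substPow d a n * x ^ n) ∧
      ∑' n, substPow d a n * x ^ n ≤ x ^ (d - 1) * ∑' n, a n * x ^ n := by
  have hxd0 : 0 < x ^ d := pow_pos hx0 d
  have hxd1 : x ^ d < 1 := pow_lt_one₀ hx0.le hx1 (by omega)
  have hsum : Summable fun k => a k * (x ^ d) ^ k := hs _ hxd0 hxd1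
  have hS : Summable fun n => a n * x ^ n := hs x hx0 hx1
  have hinj : Function.Injective (fun k : ℕ => d * k) := fun p q h => by
    have : d * p = d * q := h
    exact Nat.eq_of_mul_eq_mul_left (by omega) this
  have hoff : ∀ n ∉ Set.range (fun k : ℕ => d * k), substPow d a n * x ^ n = 0 := by
    intro n hn
    have hnd : ¬ d ∣ n := by
      rintro ⟨k, rfl⟩; exact hn ⟨k, rfl⟩
    simp [substPow, hnd]
  have hcomp : ((fun n => substPow d a n * x ^ n) ∘ fun k : ℕ => d * k) =
      fun k => a k * (x ^ d) ^ k := by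
    funext k
    have h1 : d ∣ d * k := Dvd.intro k rfl
    simp only [Function.comp_apply, substPow, if_pos h1,
      Nat.mul_div_cancel_left k (show 0 < d by omega), pow_mul]
  have hsum2 : Summable (fun n => substPow d a n * x ^ n) :=
    (hinj.summable_iff hoff).mp (by rw [hcomp]; exact hsum)
  refine ⟨hsum2, ?_⟩
  have hts : ∑' n, substPow d a n * x ^ n = ∑' k, a k * (x ^ d) ^ k := by
    rw [← hinj.tsum_eq (f := fun n => substPow d a n * x ^ n)
      (Function.support_subset_iff'.mpr hoff)]
    exact congrArg tsum hcomp
  rw [hts]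
  have hle : ∀ k, a k * (x ^ d) ^ k ≤ x ^ (d - 1) * (a k * x ^ k) := by
    intro k
    rcases Nat.eq_zero_or_pos k with rfl | hk
    · simp [ha0]
    · have hk' : k ≤ d * k := Nat.le_mul_of_pos_left k (by omega)
      have h1 : (x ^ d) ^ k = x ^ k * x ^ (d * k - k) := by
        rw [← pow_add, ← pow_mul]; congr 1; omega
      have hsub : d * k - k = (d - 1) * k := by rw [Nat.sub_mul, one_mul]
      have h2 : x ^ (d * k - k) ≤ x ^ (d - 1) := by
        apply pow_le_pow_of_le_one hx0.le hx1.le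
        rw [hsub]
        exact Nat.le_mul_of_pos_right _ hk
      calc a k * (x ^ d) ^ k = a k * x ^ k * x ^ (d * k - k) := by rw [h1]; ring
        _ ≤ a k * x ^ k * x ^ (d - 1) :=
            mul_le_mul_of_nonneg_left h2 (mul_nonneg (ha k) (pow_nonneg hx0.le k))
        _ = x ^ (d - 1) * (a k * x ^ k) := by ring
  calc ∑' k, a k * (x ^ d) ^ k ≤ ∑' k, x ^ (d - 1) * (a k * x ^ k) :=
        Summable.tsum_le_tsum hle hsum (hS.mul_left _)
    _ = x ^ (d - 1) * ∑' n, a n * x ^ n := tsum_mul_left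

lemma cauchy_summable_tsum {u v : ℕ → ℝ} (hu0 : ∀ n, 0 ≤ u n) (hv0 : ∀ n, 0 ≤ v n)
    (hu : Summable u) (hv : Summable v) :
    Summable (fun n => ∑ k ∈ Finset.range (n+1), u k * v (n-k)) ∧
      ∑' n, (∑ k ∈ Finset.range (n+1), u k * v (n-k)) = (∑' n, u n) * (∑' n, v n) := by
  have hu' : Summable fun n => ‖u n‖ := by
    simpa only [Real.norm_eq_abs] using hu.abs
  have hv' : Summable fun n => ‖v n‖ := by
    simpa only [Real.norm_eq_abs] using hv.abs
  have h1 : Summable fun n => ‖∑ k ∈ Finset.range (n+1), u k * v (n-k)‖ :=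
    summable_norm_sum_mul_range_of_summable_norm hu' hv'
  refine ⟨h1.of_norm, ?_⟩
  exact (Summable.tsum_mul_tsum_eq_tsum_sum_range hu hv (summable_mul_of_summable_norm hu' hv')).symm

lemma cauchy_mul_pow (a b : ℕ → ℝ) (x : ℝ) (n : ℕ) :
    cauchy a b n * x ^ n = ∑ k ∈ Finset.range (n+1), (a k * x ^ k) * (b (n-k) * x ^ (n-k)) := by
  rw [cauchy, Finset.sum_mul]
  refine Finset.sum_congr rfl fun k hk => ?_
  rw [Finset.mem_range] at hk
  have hx : x ^ n = x ^ k * x ^ (n - k) := by rw [← pow_add]; congr 1; omega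
  rw [hx]; ring

lemma cauchyProd_summable_tsum : ∀ {j : ℕ} {f : Fin j → ℕ → ℝ} {x : ℝ}, 0 ≤ x →
    (∀ i n, 0 ≤ f i n) → (∀ i, Summable fun n => f i n * x ^ n) →
    Summable (fun n => cauchyProd j f n * x ^ n) ∧
      ∑' n, cauchyProd j f n * x ^ n = ∏ i, ∑' n, f i n * x ^ n := by
  intro j
  induction j with
  | zero =>
    intro f x _ _ _
    have hss : Summable (fun n => cauchyProd 0 f n * x ^ n) := by
      apply summable_of_ne_finset_zero (s := ({0} : Finset ℕ))
      intro n hn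
      simp only [Finset.mem_singleton] at hn
      simp [cauchyProd, hn]
    refine ⟨hss, ?_⟩
    rw [tsum_eq_sum (s := ({0} : Finset ℕ))]
    · simp [cauchyProd]
    · intro n hn
      simp only [Finset.mem_singleton] at hn
      simp [cauchyProd, hn]
  | succ j ih =>
    intro f x hx0 hf0 hf
    obtain ⟨hs, ht⟩ := ih hx0 (fun i n => hf0 i.succ n) (fun i => hf i.succ)
    have hkey : (fun n => cauchyProd (j+1) f n * x ^ n) = fun n =>
        ∑ k ∈ Finset.range (n+1), (f 0 k * x ^ k) *
          ((cauchyProd j fun i => f i.succ) (n-k) * x ^ (n-k)) := by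
      funext n
      exact cauchy_mul_pow (f 0) (cauchyProd j fun i => f i.succ) x n
    have hun : ∀ n, 0 ≤ f 0 n * x ^ n := fun n => mul_nonneg (hf0 0 n) (pow_nonneg hx0 n)
    have hvn : ∀ n, 0 ≤ (cauchyProd j fun i => f i.succ) n * x ^ n := fun n =>
      mul_nonneg (cauchyProd_nonneg (fun i m => hf0 i.succ m) n) (pow_nonneg hx0 n)
    obtain ⟨hS, hT⟩ := cauchy_summable_tsum hun hvn (hf 0) hs
    constructor
    · rw [hkey]; exact hS
    · rw [hkey, hT, ht, Fin.prod_univ_succ]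

end AuxLemmas

section EmLemmas

variable {a : ℕ → ℝ}

lemma sum_pow_pred (x : ℝ) : ∀ M : ℕ,
    ∑ k ∈ Finset.Icc 1 M, x ^ (k - 1) = ∑ i ∈ Finset.range M, x ^ i := by
  intro M
  induction M with
  | zero => simp
  | succ M ihM =>
    rw [Finset.sum_Icc_succ_top (by omega), ihM, Finset.sum_range_succ]
    simp

lemma Em_nonneg (ha : ∀ n, 0 ≤ a n) (m n : ℕ) : 0 ≤ Em m a n := by
  rcases eq_or_ne m 0 with rfl | hm
  · simp only [Em, if_pos rfl]
    by_cases hn : n = 0 <;> simp [hn]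
  · simp only [Em, if_neg hm]
    apply Finset.sum_nonneg; intro j _
    apply mul_nonneg (by positivity)
    apply Finset.sum_nonneg; intro t _
    apply mul_nonneg (by positivity)
    exact cauchyProd_nonneg (fun i k => substPow_nonneg ha _ k) n

lemma Em_vanish (ha0 : a 0 = 0) {m n : ℕ} (hm : 1 ≤ m) (hn : n < m) : Em m a n = 0 := by
  simp only [Em, if_neg (show m ≠ 0 by omega)]
  apply Finset.sum_eq_zero; intro j _
  rw [mul_eq_zero]; right
  apply Finset.sum_eq_zero; intro t ht
  rw [mul_eq_zero]; right
  rw [Finset.mem_filter, Finset.Nat.mem_antidiagonalTuple] at ht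
  exact cauchyProd_vanish (d := t) (fun i k hk => substPow_vanish ha0 hk)
    (by rw [ht.1]; exact hn)

lemma Em_eq (hm : m ≠ 0) (n : ℕ) (x : ℝ) : Em m a n * x ^ n =
    ∑ j ∈ Finset.Icc 1 m, (1 / (Nat.factorial j : ℝ)) *
      ∑ t ∈ (Finset.Nat.antidiagonalTuple j m).filter (fun t => ∀ i, 1 ≤ t i),
        (1 / ∏ i, (t i : ℝ)) * (cauchyProd j (fun i => substPow (t i) a) n * x ^ n) := by
  simp only [Em, if_neg hm]
  rw [Finset.sum_mul]
  refine Finset.sum_congr rfl fun j _ => ?_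
  rw [mul_assoc, Finset.sum_mul]
  congr 1
  refine Finset.sum_congr rfl fun t _ => ?_
  ring

lemma Em_summable_tsum_le (ha0 : a 0 = 0) (ha : ∀ n, 0 ≤ a n)
    (hs : ∀ y : ℝ, 0 < y → y < 1 → Summable fun n => a n * y ^ n)
    {x : ℝ} (hx0 : 0 < x) (hx1 : x < 1) {m : ℕ} (hm : 1 ≤ m) :
    Summable (fun n => Em m a n * x ^ n) ∧
      ∑' n, Em m a n * x ^ n ≤ Real.exp ((∑' n, a n * x ^ n) / (1 - x)) := by
  have hm0 : m ≠ 0 := by omega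
  set S : ℝ := ∑' n, a n * x ^ n with hSdef
  have hS0 : 0 ≤ S := tsum_nonneg fun n => mul_nonneg (ha n) (pow_nonneg hx0.le n)
  have h1x : 0 < 1 - x := by linarith
  set L : ℝ := S / (1 - x) with hLdef
  have hL0 : 0 ≤ L := div_nonneg hS0 h1x.le
  -- the inner cauchyProd series are summable with product tsum
  have hsub : ∀ d : ℕ, 1 ≤ d → Summable (fun n => substPow d a n * x ^ n) ∧
      ∑' n, substPow d a n * x ^ n ≤ x ^ (d - 1) * S :=
    fun d hd => substPow_summable_tsum ha0 ha hs hx0 hx1 hd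
  set V : ℕ → ℝ := fun d => ∑' n, substPow d a n * x ^ n with hVdef
  have hV0 : ∀ d, 0 ≤ V d := fun d =>
    tsum_nonneg fun n => mul_nonneg (substPow_nonneg ha d n) (pow_nonneg hx0.le n)
  have hVle : ∀ d, 1 ≤ d → V d ≤ S := by
    intro d hd
    refine le_trans (hsub d hd).2 ?_
    calc x ^ (d - 1) * S ≤ 1 * S := by
          apply mul_le_mul_of_nonneg_right _ hS0
          exact pow_le_one₀ hx0.le hx1.le
      _ = S := one_mul S
  -- summability and value of each cauchyProd term
  have hcp : ∀ (j : ℕ) (t : Fin j → ℕ), (∀ i, 1 ≤ t i) →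
      Summable (fun n => cauchyProd j (fun i => substPow (t i) a) n * x ^ n) ∧
        ∑' n, cauchyProd j (fun i => substPow (t i) a) n * x ^ n = ∏ i, V (t i) := by
    intro j t ht
    exact cauchyProd_summable_tsum hx0.le (fun i k => substPow_nonneg ha _ k)
      (fun i => (hsub (t i) (ht i)).1)
  -- summability of Em
  have hsumEm : Summable (fun n => Em m a n * x ^ n) := by
    have : (fun n => Em m a n * x ^ n) = fun n =>
        ∑ j ∈ Finset.Icc 1 m, (1 / (Nat.factorial j : ℝ)) *
          ∑ t ∈ (Finset.Nat.antidiagonalTuple j m).filter (fun t => ∀ i, 1 ≤ t i),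
            (1 / ∏ i, (t i : ℝ)) * (cauchyProd j (fun i => substPow (t i) a) n * x ^ n) :=
      funext fun n => Em_eq hm0 n x
    rw [this]
    apply summable_sum; intro j _
    apply Summable.mul_left
    apply summable_sum; intro t ht
    apply Summable.mul_left
    rw [Finset.mem_filter] at ht
    exact (hcp j t ht.2).1
  refine ⟨hsumEm, ?_⟩
  -- compute/estimate the tsum
  have hts : ∑' n, Em m a n * x ^ n =
      ∑ j ∈ Finset.Icc 1 m, (1 / (Nat.factorial j : ℝ)) *
        ∑ t ∈ (Finset.Nat.antidiagonalTuple j m).filter (fun t => ∀ i, 1 ≤ t i),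
          (1 / ∏ i, (t i : ℝ)) * ∏ i, V (t i) := by
    calc ∑' n, Em m a n * x ^ n
        = ∑' n, ∑ j ∈ Finset.Icc 1 m, (1 / (Nat.factorial j : ℝ)) *
            ∑ t ∈ (Finset.Nat.antidiagonalTuple j m).filter (fun t => ∀ i, 1 ≤ t i),
              (1 / ∏ i, (t i : ℝ)) * (cauchyProd j (fun i => substPow (t i) a) n * x ^ n) := by
          exact tsum_congr fun n => Em_eq hm0 n x
      _ = ∑ j ∈ Finset.Icc 1 m, ∑' n, (1 / (Nat.factorial j : ℝ)) *
            ∑ t ∈ (Finset.Nat.antidiagonalTuple j m).filter (fun t => ∀ i, 1 ≤ t i),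
              (1 / ∏ i, (t i : ℝ)) * (cauchyProd j (fun i => substPow (t i) a) n * x ^ n) := by
          apply Summable.tsum_finsetSum; intro j _
          apply Summable.mul_left
          apply summable_sum; intro t ht
          rw [Finset.mem_filter] at ht
          exact Summable.mul_left _ (hcp j t ht.2).1
      _ = ∑ j ∈ Finset.Icc 1 m, (1 / (Nat.factorial j : ℝ)) *
            ∑ t ∈ (Finset.Nat.antidiagonalTuple j m).filter (fun t => ∀ i, 1 ≤ t i),
              (1 / ∏ i, (t i : ℝ)) * ∏ i, V (t i) := by
          refine Finset.sum_congr rfl fun j _ => ?_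
          rw [tsum_mul_left]
          congr 1
          rw [Summable.tsum_finsetSum (fun t ht => by
            rw [Finset.mem_filter] at ht
            exact Summable.mul_left _ (hcp j t ht.2).1)]
          refine Finset.sum_congr rfl fun t ht => ?_
          rw [Finset.mem_filter] at ht
          rw [tsum_mul_left, (hcp j t ht.2).2]
  rw [hts]
  -- bound each j-term by L^j / j!
  have hbound : ∀ j ∈ Finset.Icc 1 m,
      (1 / (Nat.factorial j : ℝ)) *
        ∑ t ∈ (Finset.Nat.antidiagonalTuple j m).filter (fun t => ∀ i, 1 ≤ t i),
          (1 / ∏ i, (t i : ℝ)) * ∏ i, V (t i) ≤ L ^ j / (Nat.factorial j : ℝ) := by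
    intro j hj
    rw [div_eq_mul_one_div (L ^ j), mul_comm (L ^ j), ]
    apply mul_le_mul_of_nonneg_left _ (by positivity)
    -- ∑_t (1/∏ t) ∏ V(t i) ≤ L ^ j
    have hterm : ∀ t : Fin j → ℕ, (∀ i, 1 ≤ t i) →
        (1 / ∏ i, (t i : ℝ)) * ∏ i, V (t i) = ∏ i, V (t i) / (t i : ℝ) := by
      intro t _
      rw [Finset.prod_div_distrib, one_div_mul_eq_div]
    have hsubset : (Finset.Nat.antidiagonalTuple j m).filter (fun t => ∀ i, 1 ≤ t i) ⊆
        Fintype.piFinset (fun _ : Fin j => Finset.Icc 1 m) := by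
      intro t ht
      rw [Finset.mem_filter, Finset.Nat.mem_antidiagonalTuple] at ht
      rw [Fintype.mem_piFinset]
      intro i
      rw [Finset.mem_Icc]
      refine ⟨ht.2 i, ?_⟩
      calc t i ≤ ∑ i', t i' :=
            Finset.single_le_sum (fun i' _ => Nat.zero_le _) (Finset.mem_univ i)
        _ = m := ht.1
    have hc0 : ∀ k : ℕ, 0 ≤ V k / (k : ℝ) := fun k => div_nonneg (hV0 k) (Nat.cast_nonneg k)
    have hgeom : ∑ k ∈ Finset.Icc 1 m, x ^ (k - 1) ≤ 1 / (1 - x) := by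
      rw [sum_pow_pred x m, geom_sum_eq hx1.ne]
      have hrw : (x ^ m - 1) / (x - 1) = (1 - x ^ m) / (1 - x) := by
        rw [← neg_div_neg_eq]; ring_nf
      rw [hrw]
      exact (div_le_div_iff_of_pos_right h1x).mpr (by nlinarith [pow_nonneg hx0.le m])
    have hLsum : ∑ k ∈ Finset.Icc 1 m, V k / (k : ℝ) ≤ L := by
      calc ∑ k ∈ Finset.Icc 1 m, V k / (k : ℝ)
          ≤ ∑ k ∈ Finset.Icc 1 m, x ^ (k - 1) * S := by
            apply Finset.sum_le_sum
            intro k hk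
            have hk1 : 1 ≤ k := (Finset.mem_Icc.mp hk).1
            calc V k / (k : ℝ) ≤ V k := div_le_self (hV0 k) (by exact_mod_cast hk1)
              _ ≤ x ^ (k - 1) * S := (hsub k hk1).2
        _ = S * ∑ k ∈ Finset.Icc 1 m, x ^ (k - 1) := by
            rw [Finset.mul_sum]
            exact Finset.sum_congr rfl fun k _ => mul_comm _ _
        _ ≤ S * (1 / (1 - x)) := mul_le_mul_of_nonneg_left hgeom hS0
        _ = L := by rw [hLdef]; ring
    calc ∑ t ∈ (Finset.Nat.antidiagonalTuple j m).filter (fun t => ∀ i, 1 ≤ t i),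
          (1 / ∏ i, (t i : ℝ)) * ∏ i, V (t i)
        = ∑ t ∈ (Finset.Nat.antidiagonalTuple j m).filter (fun t => ∀ i, 1 ≤ t i),
            ∏ i, V (t i) / (t i : ℝ) :=
          Finset.sum_congr rfl fun t ht => hterm t (Finset.mem_filter.mp ht).2
      _ ≤ ∑ t ∈ Fintype.piFinset (fun _ : Fin j => Finset.Icc 1 m),
            ∏ i, V (t i) / (t i : ℝ) :=
          Finset.sum_le_sum_of_subset_of_nonneg hsubset
            (fun t _ _ => Finset.prod_nonneg fun i _ => hc0 _)
      _ = (∑ k ∈ Finset.Icc 1 m, V k / (k : ℝ)) ^ j := by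
          rw [← Finset.prod_univ_sum (fun _ : Fin j => Finset.Icc 1 m) (fun _ k => V k / (k : ℝ))]
          simp [Finset.prod_const]
      _ ≤ L ^ j := pow_le_pow_left₀ (Finset.sum_nonneg fun k _ => hc0 k) hLsum j
  calc ∑ j ∈ Finset.Icc 1 m, (1 / (Nat.factorial j : ℝ)) *
        ∑ t ∈ (Finset.Nat.antidiagonalTuple j m).filter (fun t => ∀ i, 1 ≤ t i),
          (1 / ∏ i, (t i : ℝ)) * ∏ i, V (t i)
      ≤ ∑ j ∈ Finset.Icc 1 m, L ^ j / (Nat.factorial j : ℝ) := Finset.sum_le_sum hbound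
    _ ≤ ∑ j ∈ Finset.range (m + 1), L ^ j / (Nat.factorial j : ℝ) := by
        apply Finset.sum_le_sum_of_subset_of_nonneg
        · intro j hj
          rw [Finset.mem_Icc] at hj
          rw [Finset.mem_range]
          omega
        · intro j _ _
          positivity
    _ ≤ Real.exp L := Real.sum_le_exp_of_nonneg hL0 (m + 1)

end EmLemmas

section EgeLemmas

variable {a : ℕ → ℝ}

lemma Ege_eq_sum (ha0 : a 0 = 0) {m : ℕ} (hm : 1 ≤ m) (n : ℕ) :
    Ege m a n = ∑ j ∈ Finset.Icc m n, Em j a n := by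
  rw [Ege, tsum_eq_sum (s := Finset.Icc m n) ?_]
  · refine Finset.sum_congr rfl fun j hj => if_pos (Finset.mem_Icc.mp hj).1
  · intro j hj
    rw [Finset.mem_Icc] at hj
    push_neg at hj
    by_cases h : m ≤ j
    · rw [if_pos h, Em_vanish ha0 (le_trans hm h) (hj h)]
    · rw [if_neg h]

lemma Ege_nonneg (ha0 : a 0 = 0) (ha : ∀ n, 0 ≤ a n) {m : ℕ} (hm : 1 ≤ m) (n : ℕ) :
    0 ≤ Ege m a n := by
  rw [Ege_eq_sum ha0 hm]
  exact Finset.sum_nonneg fun j _ => Em_nonneg ha j n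

lemma Ege_summable (ha0 : a 0 = 0) (ha : ∀ n, 0 ≤ a n)
    (hs : ∀ y : ℝ, 0 < y → y < 1 → Summable fun n => a n * y ^ n)
    {x : ℝ} (hx0 : 0 < x) (hx1 : x < 1) {m : ℕ} (hm : 1 ≤ m) :
    Summable (fun n => Ege m a n * x ^ n) := by
  set y : ℝ := (x + 1) / 2 with hydef
  have hy0 : 0 < y := by rw [hydef]; linarith
  have hy1 : y < 1 := by rw [hydef]; linarith
  have hxy : x < y := by rw [hydef]; linarith
  set q : ℝ := x / y with hqdef
  have hq0 : 0 ≤ q := div_nonneg hx0.le hy0.le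
  have hq1 : q < 1 := (div_lt_one hy0).mpr hxy
  set C : ℝ := Real.exp ((∑' n, a n * y ^ n) / (1 - y)) with hCdef
  have hC0 : 0 ≤ C := (Real.exp_pos _).le
  have hxqy : x = q * y := by
    rw [hqdef]; field_simp
  have hEmC : ∀ j : ℕ, 1 ≤ j → ∀ n, Em j a n * y ^ n ≤ C := by
    intro j hj n
    obtain ⟨hsj, htj⟩ := Em_summable_tsum_le ha0 ha hs hy0 hy1 hj
    calc Em j a n * y ^ n ≤ ∑' k, Em j a k * y ^ k :=
          Summable.le_tsum hsj n fun k _ => mul_nonneg (Em_nonneg ha j k) (pow_nonneg hy0.le k)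
      _ ≤ C := htj
  apply Summable.of_nonneg_of_le
    (f := fun n : ℕ => C * ((n : ℝ) ^ 1 * q ^ n) + C * q ^ n)
  · intro n
    exact mul_nonneg (Ege_nonneg ha0 ha hm n) (pow_nonneg hx0.le n)
  · intro n
    have hcard : ((Finset.Icc m n).card : ℝ) ≤ (n : ℝ) + 1 := by
      rw [Nat.card_Icc]
      push_cast
      have : (n + 1 - m : ℕ) ≤ n + 1 := by omega
      exact_mod_cast this
    have hstep : Ege m a n * y ^ n ≤ ((n : ℝ) + 1) * C := by
      rw [Ege_eq_sum ha0 hm, Finset.sum_mul]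
      calc ∑ j ∈ Finset.Icc m n, Em j a n * y ^ n
          ≤ ((Finset.Icc m n).card : ℝ) * C := by
            rw [← nsmul_eq_mul]
            exact Finset.sum_le_card_nsmul _ _ C fun j hj =>
              hEmC j (le_trans hm (Finset.mem_Icc.mp hj).1) n
        _ ≤ ((n : ℝ) + 1) * C := mul_le_mul_of_nonneg_right hcard hC0
    calc Ege m a n * x ^ n = (Ege m a n * y ^ n) * q ^ n := by
          rw [hxqy, mul_pow]; ring
      _ ≤ (((n : ℝ) + 1) * C) * q ^ n :=
          mul_le_mul_of_nonneg_right hstep (pow_nonneg hq0 n)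
      _ = C * ((n : ℝ) ^ 1 * q ^ n) + C * q ^ n := by ring
  · apply Summable.add
    · apply Summable.mul_left
      apply summable_pow_mul_geometric_of_norm_lt_one 1
      rw [Real.norm_eq_abs, abs_of_nonneg hq0]
      exact hq1
    · exact Summable.mul_left _ (summable_geometric_of_lt_one hq0 hq1)

end EgeLemmas

/-- Inductive invariant: zero constant term, nonnegative coefficients,
and summability against `x ^ n` for every `x ∈ (0,1)`. -/
lemma InG_good {a : ℕ → ℝ} (ha : InG a) :
    a 0 = 0 ∧ (∀ n, 0 ≤ a n) ∧
      ∀ x : ℝ, 0 < x → x < 1 → Summable fun n => a n * x ^ n := by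
  induction ha with
  | X =>
    refine ⟨by norm_num, fun n => by dsimp only; split <;> norm_num, fun x hx0 hx1 => ?_⟩
    apply summable_of_ne_finset_zero (s := ({1} : Finset ℕ))
    intro n hn
    rw [Finset.mem_singleton] at hn
    simp [hn]
  | geom m hm =>
    refine ⟨by norm_num, fun n => by dsimp only; split <;> norm_num, fun x hx0 hx1 => ?_⟩
    apply Summable.of_nonneg_of_le (f := fun n : ℕ => x ^ n)
    · intro n
      dsimp only
      split <;> simp [pow_nonneg hx0.le n]
    · intro n; dsimp only; split
      · rw [one_mul]
      · rw [zero_mul]; exact pow_nonneg hx0.le n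
    · exact summable_geometric_of_lt_one hx0.le hx1
  | add a b _ _ iha ihb =>
    obtain ⟨ha0, han, has⟩ := iha
    obtain ⟨hb0, hbn, hbs⟩ := ihb
    refine ⟨by dsimp only; rw [ha0, hb0, add_zero], fun n => add_nonneg (han n) (hbn n),
      fun x hx0 hx1 => ?_⟩
    have := (has x hx0 hx1).add (hbs x hx0 hx1)
    refine this.congr fun n => ?_
    dsimp only; ring
  | mul a b _ _ iha ihb =>
    obtain ⟨ha0, han, has⟩ := iha
    obtain ⟨hb0, hbn, hbs⟩ := ihb
    refine ⟨by simp [cauchy, ha0], fun n => cauchy_nonneg han hbn n, fun x hx0 hx1 => ?_⟩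
    have key := (cauchy_summable_tsum
      (fun n => mul_nonneg (han n) (pow_nonneg hx0.le n))
      (fun n => mul_nonneg (hbn n) (pow_nonneg hx0.le n))
      (has x hx0 hx1) (hbs x hx0 hx1)).1
    refine key.congr fun n => (cauchy_mul_pow a b x n).symm
  | em a m hm _ iha =>
    obtain ⟨ha0, han, has⟩ := iha
    exact ⟨Em_vanish ha0 hm (by omega), Em_nonneg han m,
      fun x hx0 hx1 => (Em_summable_tsum_le ha0 han has hx0 hx1 hm).1⟩
  | ege a m hm _ iha =>
    obtain ⟨ha0, han, has⟩ := iha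
    refine ⟨?_, Ege_nonneg ha0 han hm, fun x hx0 hx1 => Ege_summable ha0 han has hx0 hx1 hm⟩
    rw [Ege_eq_sum ha0 hm]
    have : Finset.Icc m 0 = ∅ := by
      rw [Finset.Icc_eq_empty_iff]
      omega
    rw [this, Finset.sum_empty]

/-- Every member of `𝔊` has radius of convergence at least 1. -/
theorem G_radius_ge_one (a : ℕ → ℝ) (ha : InG a) (x : ℝ) (hx : |x| < 1) :
    Summable (fun n => |a n| * |x| ^ n) := by
  obtain ⟨h0, hpos, hsum⟩ := InG_good ha
  have habs : ∀ n, |a n| = a n := fun n => abs_of_nonneg (hpos n)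
  rcases eq_or_lt_of_le (abs_nonneg x) with h | h
  · apply summable_of_ne_finset_zero (s := ({0} : Finset ℕ))
    intro n hn
    rw [Finset.mem_singleton] at hn
    rw [← h, zero_pow hn, mul_zero]
  · simpa only [habs] using hsum |x| h hx
end
end
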